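/- (Gale–Ryser, column-sum form) Let a ∈ ℕ^m and b ∈ ℕ^n with b sorted in non-increasing order, and let z_j = |{i : a_i ≥ j}|. Then there exists an m×n binary matrix with row sums a and column sums b if and only if Σ_i a_i = Σ_j b_j and for every r ∈ {1,…,n}, Σ_{j=1}^r z_j ≥ Σ_{j=1}^r b_j. -/
import Mathlib
open Finset
namespace GaleRyser
variable {m n : ℕ}

def col (M : Fin m → Fin n → Bool) (j : Fin n) : ℕ :=
  (Finset.univ.filter (fun i => M i j = true)).card

def rw (M : Fin m → Fin n → Bool) (i : Fin m) : ℕ :=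
  (Finset.univ.filter (fun j => M i j = true)).card

def pre (c : Fin n → ℕ) (r : ℕ) : ℕ :=
  ∑ j ∈ Finset.univ.filter (fun j : Fin n => (j : ℕ) < r), c j

lemma pre_succ (c : Fin n → ℕ) (j : Fin n) :
    pre c (j.1 + 1) = pre c j.1 + c j := by
  unfold pre
  have h : Finset.univ.filter (fun j' : Fin n => (j' : ℕ) < j.1 + 1)
      = insert j (Finset.univ.filter (fun j' : Fin n => (j' : ℕ) < j.1)) := by
    ext x
    simp only [mem_filter, mem_univ, true_and, mem_insert]
    constructor
    · intro h
      rcases Nat.lt_succ_iff_lt_or_eq.1 h with h | h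
      · exact Or.inr h
      · exact Or.inl (Fin.ext h)
    · rintro (rfl | h) <;> omega
  rw [h, Finset.sum_insert (by simp), add_comm]

lemma pre_split (c : Fin n → ℕ) (s r : ℕ) (hsr : s ≤ r) :
    pre c r = pre c s +
      ∑ j ∈ Finset.univ.filter (fun j : Fin n => s ≤ (j : ℕ) ∧ (j : ℕ) < r), c j := by
  unfold pre
  rw [← Finset.sum_filter_add_sum_filter_not (Finset.univ.filter (fun j : Fin n => (j : ℕ) < r))
      (fun j : Fin n => (j : ℕ) < s)]
  congr 1
  · congr 1
    ext x
    simp only [mem_filter, mem_univ, true_and]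
    omega
  · congr 1
    ext x
    simp only [mem_filter, mem_univ, true_and]
    omega

lemma pre_eq_of_ge (c : Fin n → ℕ) (r : ℕ) (hr : n ≤ r) : pre c r = ∑ j, c j := by
  unfold pre
  congr 1
  ext x
  simp only [mem_filter, mem_univ, true_and, iff_true]
  omega

lemma pre_congr {c d : Fin n → ℕ} (r : ℕ) (h : ∀ j : Fin n, (j : ℕ) < r → c j = d j) :
    pre c r = pre d r := by
  unfold pre
  apply Finset.sum_congr rfl
  intro x hx
  exact h x (by simpa using hx)

def swap (M : Fin m → Fin n → Bool) (i : Fin m) (j k : Fin n) : Fin m → Fin n → Bool :=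
  fun i' j' => if i' = i then (if j' = j then false else if j' = k then true else M i' j')
    else M i' j'

lemma rw_swap (M : Fin m → Fin n → Bool) (i : Fin m) (j k : Fin n) (hjk : j ≠ k)
    (hj : M i j = true) (hk : M i k = false) (i' : Fin m) :
    rw (swap M i j k) i' = rw M i' := by
  by_cases hi : i' = i
  · subst hi
    unfold rw
    have hset : Finset.univ.filter (fun j' => swap M i' j k i' j' = true)
        = insert k ((Finset.univ.filter (fun j' => M i' j' = true)).erase j) := by
      ext x
      simp only [swap, if_pos rfl, mem_filter, mem_univ, true_and, mem_insert, mem_erase]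
      by_cases hxj : x = j
      · subst hxj; simp [hjk, hj]
      · by_cases hxk : x = k
        · subst hxk; simp [hxj]
        · simp [hxj, hxk]
    rw [hset, Finset.card_insert_of_notMem (by simp [hk]),
      Finset.card_erase_of_mem (by simp [hj])]
    have : 0 < (Finset.univ.filter (fun j' => M i' j' = true)).card :=
      Finset.card_pos.2 ⟨j, by simp [hj]⟩
    omega
  · unfold rw
    congr 1
    apply Finset.filter_congr
    intro x _
    simp [swap, hi]

lemma col_swap_j (M : Fin m → Fin n → Bool) (i : Fin m) (j k : Fin n) (hjk : j ≠ k)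
    (hj : M i j = true) : col (swap M i j k) j + 1 = col M j := by
  unfold col
  have hset : Finset.univ.filter (fun i' => swap M i j k i' j = true)
      = (Finset.univ.filter (fun i' => M i' j = true)).erase i := by
    ext x
    simp only [swap, mem_filter, mem_univ, true_and, mem_erase]
    by_cases hxi : x = i
    · subst hxi; simp [hjk]
    · simp [hxi]
  rw [hset, Finset.card_erase_of_mem (by simp [hj])]
  have : 0 < (Finset.univ.filter (fun i' => M i' j = true)).card :=
    Finset.card_pos.2 ⟨i, by simp [hj]⟩
  omega

lemma col_swap_k (M : Fin m → Fin n → Bool) (i : Fin m) (j k : Fin n) (hjk : j ≠ k)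
    (hk : M i k = false) : col (swap M i j k) k = col M k + 1 := by
  unfold col
  have hset : Finset.univ.filter (fun i' => swap M i j k i' k = true)
      = insert i (Finset.univ.filter (fun i' => M i' k = true)) := by
    ext x
    simp only [swap, mem_filter, mem_univ, true_and, mem_insert]
    by_cases hxi : x = i
    · subst hxi; simp [hjk.symm]
    · simp [hxi]
  rw [hset, Finset.card_insert_of_notMem (by simp [hk])]

lemma col_swap_other (M : Fin m → Fin n → Bool) (i : Fin m) (j k : Fin n) (j' : Fin n)
    (hj' : j' ≠ j) (hk' : j' ≠ k) : col (swap M i j k) j' = col M j' := by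
  unfold col
  congr 1
  apply Finset.filter_congr
  intro x _
  by_cases hxi : x = i
  · subst hxi; simp [swap, hj', hk']
  · simp [swap, hxi]

/-- master sum identity for the swap -/
lemma sum_col_swap (M : Fin m → Fin n → Bool) (i : Fin m) (j k : Fin n) (hjk : j ≠ k)
    (hj : M i j = true) (hk : M i k = false) (S : Finset (Fin n)) :
    (∑ j' ∈ S, col (swap M i j k) j') + (if j ∈ S then 1 else 0)
      = (∑ j' ∈ S, col M j') + (if k ∈ S then 1 else 0) := by
  have hpt : ∀ j' : Fin n, col (swap M i j k) j' + (if j' = j then 1 else 0)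
      = col M j' + (if j' = k then 1 else 0) := by
    intro j'
    by_cases h1 : j' = j
    · subst h1
      have h := col_swap_j M i j' k hjk hj
      simp only [if_pos rfl, if_neg hjk, if_true]
      omega
    · by_cases h2 : j' = k
      · subst h2
        have h := col_swap_k M i j j' hjk hk
        simp only [if_neg h1, if_pos rfl, if_true]
        omega
      · have h := col_swap_other M i j k j' h1 h2
        simp only [if_neg h1, if_neg h2, h]
  calc (∑ j' ∈ S, col (swap M i j k) j') + (if j ∈ S then 1 else 0)
      = ∑ j' ∈ S, (col (swap M i j k) j' + (if j' = j then 1 else 0)) := by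
        rw [Finset.sum_add_distrib, Finset.sum_ite_eq' S j (fun _ => 1)]
    _ = ∑ j' ∈ S, (col M j' + (if j' = k then 1 else 0)) := by
        exact Finset.sum_congr rfl (fun x _ => hpt x)
    _ = (∑ j' ∈ S, col M j') + (if k ∈ S then 1 else 0) := by
        rw [Finset.sum_add_distrib, Finset.sum_ite_eq' S k (fun _ => 1)]

/-- The key lemma: any matrix whose column sums dominate `b` (with equal totals)
can be rearranged to one with column sums exactly `b`, keeping row sums. -/
lemma swap_lemma (b : Fin n → ℕ) (hb : Antitone b) :
    ∀ (N : ℕ) (M : Fin m → Fin n → Bool),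
    (∀ r : ℕ, pre b r ≤ pre (col M) r) →
    (∑ j, col M j = ∑ j, b j) →
    (∑ r ∈ Finset.range (n + 1), (pre (col M) r - pre b r)) = N →
    ∃ M' : Fin m → Fin n → Bool, (∀ i, rw M' i = rw M i) ∧ (∀ j, col M' j = b j) := by
  intro N
  induction N using Nat.strong_induction_on with
  | _ N ih =>
    intro M hdom htot hmeas
    by_cases hcb : ∀ j, col M j = b j
    · exact ⟨M, fun _ => rfl, hcb⟩
    · push_neg at hcb
      set c := col M with hc
      -- minimal j with c j ≠ b j
      have hTne : (Finset.univ.filter (fun j : Fin n => c j ≠ b j)).Nonempty := by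
        obtain ⟨j, hj⟩ := hcb
        exact ⟨j, by simp [hj]⟩
      set j := (Finset.univ.filter (fun j : Fin n => c j ≠ b j)).min' hTne with hjdef
      have hjT : c j ≠ b j := by
        have := Finset.min'_mem _ hTne
        simpa using this
      have hjmin : ∀ j' : Fin n, (j' : ℕ) < (j : ℕ) → c j' = b j' := by
        intro j' hj'
        by_contra hne
        have : j ≤ j' := Finset.min'_le _ _ (by simp [hne])
        exact absurd hj' (by omega)
      -- c j > b j
      have hbj : b j < c j := by
        have h1 := hdom ((j : ℕ) + 1)
        rw [pre_succ b j, pre_succ c j, pre_congr (c := b) (d := c) (j : ℕ)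
          (fun x hx => (hjmin x hx).symm)] at h1
        omega
      -- minimal k with c k < b k
      have hKne : (Finset.univ.filter (fun k : Fin n => c k < b k)).Nonempty := by
        by_contra hK
        rw [Finset.not_nonempty_iff_eq_empty] at hK
        have hall : ∀ k : Fin n, b k ≤ c k := by
          intro k
          by_contra h
          have : k ∈ Finset.univ.filter (fun k : Fin n => c k < b k) := by
            simp; omega
          simp [hK] at this
        have : ∑ x, b x < ∑ x, c x :=
          Finset.sum_lt_sum (fun x _ => hall x) ⟨j, Finset.mem_univ j, hbj⟩
        omega
      set k := (Finset.univ.filter (fun k : Fin n => c k < b k)).min' hKne with hkdef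
      have hkK : c k < b k := by
        have := Finset.min'_mem _ hKne
        simpa using this
      have hjk : (j : ℕ) < (k : ℕ) := by
        have h1 : j ≤ k := Finset.min'_le _ _ (by simp; omega)
        have h2 : j ≠ k := by
          intro h; rw [h] at hbj; omega
        have := Fin.lt_or_eq_of_le h1  -- maybe not exists; use omega on vals
        rcases lt_or_eq_of_le h1 with h | h
        · exact h
        · exact absurd h h2
      have hkmin : ∀ j' : Fin n, (j : ℕ) < (j' : ℕ) → (j' : ℕ) < (k : ℕ) → b j' ≤ c j' := by
        intro j' h1 h2
        by_contra h
        have : k ≤ j' := Finset.min'_le _ _ (by simp; omega)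
        exact absurd h2 (by omega)
      -- strict dominance strictly between
      have hstrict : ∀ r : ℕ, (j : ℕ) < r → r ≤ (k : ℕ) → pre b r + 1 ≤ pre c r := by
        intro r h1 h2
        rw [pre_split b (j : ℕ) r (by omega), pre_split c (j : ℕ) r (by omega),
          pre_congr (c := b) (d := c) (j : ℕ) (fun x hx => (hjmin x hx).symm)]
        have hsum : ∑ x ∈ Finset.univ.filter
              (fun x : Fin n => (j : ℕ) ≤ (x : ℕ) ∧ (x : ℕ) < r), b x
            < ∑ x ∈ Finset.univ.filter
              (fun x : Fin n => (j : ℕ) ≤ (x : ℕ) ∧ (x : ℕ) < r), c x := by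
          apply Finset.sum_lt_sum
          · intro x hx
            simp only [mem_filter, mem_univ, true_and] at hx
            rcases Nat.lt_or_ge (j : ℕ) (x : ℕ) with h | h
            · exact hkmin x h (by omega)
            · have : x = j := Fin.ext (by omega)
              subst this
              omega
          · exact ⟨j, by simp; omega, hbj⟩
        omega
      -- find the pivot row
      have hcard : (Finset.univ.filter (fun i => M i k = true)).card
          < (Finset.univ.filter (fun i => M i j = true)).card := by
        have : c k < c j := by
          have : b k ≤ b j := hb (le_of_lt (by exact_mod_cast hjk))
          omega
        exact this
      obtain ⟨i, hij, hik⟩ : ∃ i, M i j = true ∧ M i k = false := by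
        by_contra hcon
        push_neg at hcon
        have hsub : (Finset.univ.filter (fun i => M i j = true))
            ⊆ (Finset.univ.filter (fun i => M i k = true)) := by
          intro x hx
          simp only [mem_filter, mem_univ, true_and] at hx ⊢
          have := hcon x hx
          cases hmk : M x k with
          | false => exact absurd hmk this
          | true => rfl
        exact absurd (Finset.card_le_card hsub) (by omega)
      have hjkne : j ≠ k := fun h => by rw [h] at hjk; omega
      set M2 := swap M i j k with hM2
      have hE := sum_col_swap M i j k hjkne hij hik
      simp only [← hM2, ← hc] at hE
      -- prefix relations
      have hpre_eq : ∀ r : ℕ, (r ≤ (j : ℕ) ∨ (k : ℕ) < r) → pre (col M2) r = pre c r := by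
        intro r hr
        have := hE (Finset.univ.filter (fun j' : Fin n => (j' : ℕ) < r))
        have hjmem : (j ∈ Finset.univ.filter (fun j' : Fin n => (j' : ℕ) < r))
            ↔ (j : ℕ) < r := by simp
        have hkmem : (k ∈ Finset.univ.filter (fun j' : Fin n => (j' : ℕ) < r))
            ↔ (k : ℕ) < r := by simp
        unfold pre
        rcases hr with hr | hr
        · rw [if_neg (by rw [hjmem]; omega), if_neg (by rw [hkmem]; omega)] at this
          omega
        · rw [if_pos (by rw [hjmem]; omega), if_pos (by rw [hkmem]; omega)] at this
          omega
      have hpre_lt : ∀ r : ℕ, (j : ℕ) < r → r ≤ (k : ℕ) →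
          pre (col M2) r + 1 = pre c r := by
        intro r h1 h2
        have := hE (Finset.univ.filter (fun j' : Fin n => (j' : ℕ) < r))
        rw [if_pos (by simp; omega), if_neg (by simp; omega)] at this
        unfold pre
        omega
      have htot2 : ∑ j', col M2 j' = ∑ j', b j' := by
        have := hE Finset.univ
        rw [if_pos (Finset.mem_univ j), if_pos (Finset.mem_univ k)] at this
        omega
      have hdom2 : ∀ r : ℕ, pre b r ≤ pre (col M2) r := by
        intro r
        rcases Nat.lt_or_ge (j : ℕ) r with h1 | h1
        · rcases Nat.lt_or_ge (k : ℕ) r with h2 | h2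
          · rw [hpre_eq r (Or.inr h2)]; exact hdom r
          · have := hpre_lt r h1 h2
            have := hstrict r h1 h2
            omega
        · rw [hpre_eq r (Or.inl h1)]; exact hdom r
      -- measure decrease
      have hmeas2 : (∑ r ∈ Finset.range (n + 1), (pre (col M2) r - pre b r)) < N := by
        rw [← hmeas]
        apply Finset.sum_lt_sum
        · intro r _
          rcases Nat.lt_or_ge (j : ℕ) r with h1 | h1
          · rcases Nat.lt_or_ge (k : ℕ) r with h2 | h2
            · rw [hpre_eq r (Or.inr h2)]
            · have := hpre_lt r h1 h2
              omega
          · rw [hpre_eq r (Or.inl h1)]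
        · refine ⟨(k : ℕ), Finset.mem_range.2 (by omega), ?_⟩
          have h1 := hpre_lt (k : ℕ) hjk le_rfl
          have h2 := hstrict (k : ℕ) hjk le_rfl
          omega
      obtain ⟨M', hrow', hcol'⟩ := ih _ hmeas2 M2 hdom2 htot2 rfl
      exact ⟨M', fun i' => (hrow' i').trans (rw_swap M i j k hjkne hij hik i'),
        hcol'⟩

lemma card_fin_lt (n t : ℕ) :
    (Finset.univ.filter (fun j : Fin n => (j : ℕ) < t)).card = min t n := by
  rw [← Finset.card_range (min t n)]
  refine Finset.card_bij (fun j _ => (j : ℕ)) ?_ ?_ ?_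
  · intro a ha; simp only [mem_filter, mem_univ, true_and] at ha
    simp only [mem_range]; omega
  · intro a _ b _ h; exact Fin.ext h
  · intro x hx
    simp only [mem_range] at hx
    exact ⟨⟨x, by omega⟩, by simp; omega, rfl⟩

lemma col_sum_swap (M : Fin m → Fin n → Bool) (S : Finset (Fin n)) :
    ∑ j ∈ S, (Finset.univ.filter (fun i => M i j = true)).card
      = ∑ i : Fin m, (S.filter (fun j => M i j = true)).card := by
  simp only [Finset.card_filter]
  rw [Finset.sum_comm]

lemma zsum_eq_min (a : Fin m → ℕ) (r : ℕ) :
    ∑ s ∈ Finset.Icc 1 r, (Finset.univ.filter (fun i : Fin m => s ≤ a i)).card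
      = ∑ i, min (a i) r := by
  simp only [Finset.card_filter]
  rw [Finset.sum_comm]
  apply Finset.sum_congr rfl
  intro i _
  rw [← Finset.card_filter]
  have h : (Finset.Icc 1 r).filter (fun s => s ≤ a i) = Finset.Icc 1 (min (a i) r) := by
    ext x
    simp only [mem_filter, mem_Icc]
    omega
  rw [h, Nat.card_Icc]
  omega

lemma pre_M0 (a : Fin m → ℕ) (r : ℕ) (hr : r ≤ n) :
    pre (col (fun (i : Fin m) (j : Fin n) => decide ((j : ℕ) < a i))) r
      = ∑ i, min (a i) r := by
  unfold pre col
  rw [col_sum_swap]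
  apply Finset.sum_congr rfl
  intro i _
  have h : (Finset.univ.filter (fun j : Fin n => (j : ℕ) < r)).filter
        (fun j : Fin n => (decide ((j : ℕ) < a i)) = true)
      = Finset.univ.filter (fun j : Fin n => (j : ℕ) < min (a i) r) := by
    ext x
    simp only [mem_filter, mem_univ, true_and, decide_eq_true_eq]
    omega
  rw [h, card_fin_lt]
  omega

lemma rw_M0 (a : Fin m → ℕ) (ha : ∀ i, a i ≤ n) (i : Fin m) :
    rw (fun (i : Fin m) (j : Fin n) => decide ((j : ℕ) < a i)) i = a i := by
  unfold rw
  simp only [decide_eq_true_eq]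
  rw [card_fin_lt]
  have := ha i
  omega

end GaleRyser


open GaleRyser Finset in
/-- Gale–Ryser theorem in column-sum (conjugate-partition) form. -/
theorem stmt1 (m n : ℕ) (a : Fin m → ℕ) (b : Fin n → ℕ) (hb : Antitone b) :
    (∃ M : Fin m → Fin n → Bool,
      (∀ i, (Finset.univ.filter (fun j => M i j = true)).card = a i) ∧
      (∀ j, (Finset.univ.filter (fun i => M i j = true)).card = b j)) ↔
    ((∑ i, a i = ∑ j, b j) ∧
      ∀ r ∈ Finset.Icc 1 n,
        ∑ j ∈ Finset.univ.filter (fun j : Fin n => (j : ℕ) < r), b j ≤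
          ∑ j ∈ Finset.Icc 1 r,
            (Finset.univ.filter (fun i : Fin m => j ≤ a i)).card) := by
  constructor
  · rintro ⟨M, hrow, hcol⟩
    constructor
    · calc ∑ i, a i = ∑ i : Fin m, (Finset.univ.filter (fun j => M i j = true)).card :=
            Finset.sum_congr rfl (fun i _ => (hrow i).symm)
        _ = ∑ j : Fin n, (Finset.univ.filter (fun i => M i j = true)).card := by
            rw [col_sum_swap M Finset.univ]
        _ = ∑ j, b j := Finset.sum_congr rfl (fun j _ => hcol j)
    · intro r hr
      rw [zsum_eq_min]
      calc ∑ j ∈ Finset.univ.filter (fun j : Fin n => (j : ℕ) < r), b j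
          = ∑ j ∈ Finset.univ.filter (fun j : Fin n => (j : ℕ) < r),
              (Finset.univ.filter (fun i => M i j = true)).card :=
            Finset.sum_congr rfl (fun j _ => (hcol j).symm)
        _ = ∑ i : Fin m, ((Finset.univ.filter (fun j : Fin n => (j : ℕ) < r)).filter
              (fun j => M i j = true)).card := col_sum_swap M _
        _ ≤ ∑ i, min (a i) r := by
            apply Finset.sum_le_sum
            intro i _
            have h1 : ((Finset.univ.filter (fun j : Fin n => (j : ℕ) < r)).filter
                (fun j => M i j = true)).card ≤ a i := by
              rw [← hrow i]
              apply Finset.card_le_card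
              intro x hx
              simp only [mem_filter, mem_univ, true_and] at hx ⊢
              exact hx.2
            have h2 : ((Finset.univ.filter (fun j : Fin n => (j : ℕ) < r)).filter
                (fun j => M i j = true)).card ≤ min r n := by
              rw [← card_fin_lt n r]
              exact Finset.card_le_card (Finset.filter_subset _ _)
            omega
  · rintro ⟨hsum, hineq⟩
    rcases Nat.eq_zero_or_pos n with hn | hn
    · -- n = 0 : everything is empty
      subst hn
      have hz : ∑ i, a i = 0 := by
        rw [hsum]
        exact Finset.sum_of_isEmpty _
      have ha : ∀ i, a i = 0 := by
        intro i
        have := Finset.sum_eq_zero_iff.1 hz i (Finset.mem_univ i)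
        exact this
      refine ⟨fun _ _ => false, fun i => ?_, fun j => j.elim0⟩
      simp [ha i]
    · -- n ≥ 1
      have hmin : ∀ i, min (a i) n = a i := by
        have h1 := hineq n (Finset.mem_Icc.2 ⟨hn, le_rfl⟩)
        rw [zsum_eq_min] at h1
        have h2 : ∑ j ∈ Finset.univ.filter (fun j : Fin n => (j : ℕ) < n), b j
            = ∑ j, b j := by
          apply Finset.sum_congr _ (fun _ _ => rfl)
          ext x
          simp [x.isLt]
        rw [h2, ← hsum] at h1
        have h3 : ∀ i ∈ (Finset.univ : Finset (Fin m)), min (a i) n ≤ a i :=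
          fun i _ => min_le_left _ _
        intro i
        by_contra hcon
        have h4 : min (a i) n < a i := lt_of_le_of_ne (min_le_left _ _) hcon
        have : ∑ i, min (a i) n < ∑ i, a i :=
          Finset.sum_lt_sum h3 ⟨i, Finset.mem_univ i, h4⟩
        omega
      have han : ∀ i, a i ≤ n := by
        intro i
        have := hmin i
        omega
      set M0 : Fin m → Fin n → Bool := fun i j => decide ((j : ℕ) < a i) with hM0
      have hpre : ∀ r : ℕ, r ≤ n → pre (col M0) r = ∑ i, min (a i) r :=
        fun r hr => pre_M0 a r hr
      have htot0 : ∑ j, col M0 j = ∑ j, b j := by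
        rw [← pre_eq_of_ge (col M0) n le_rfl, hpre n le_rfl, ← hsum]
        apply Finset.sum_congr rfl
        intro i _
        exact hmin i
      have hdom0 : ∀ r : ℕ, pre b r ≤ pre (col M0) r := by
        intro r
        rcases Nat.lt_or_ge r 1 with hr | hr
        · interval_cases r
          have : pre b 0 = 0 := by
            unfold pre
            apply Finset.sum_eq_zero
            intro x hx
            simp at hx
          simp [this]
        · rcases le_or_gt r n with hrn | hrn
          · rw [hpre r hrn]
            have := hineq r (Finset.mem_Icc.2 ⟨hr, hrn⟩)
            rw [zsum_eq_min] at this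
            exact this
          · rw [pre_eq_of_ge b r (by omega), pre_eq_of_ge (col M0) r (by omega), htot0]
      obtain ⟨M', hrow', hcol'⟩ := swap_lemma b hb
        (∑ r ∈ Finset.range (n + 1), (pre (col M0) r - pre b r)) M0 hdom0 htot0 rfl
      refine ⟨M', fun i => ?_, fun j => hcol' j⟩
      have := hrow' i
      unfold rw at this
      rw [this]
      exact rw_M0 a han i
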